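/- If σ₁ is separable then R(σ₁ ⊗ σ₂) ≤ R(σ₂): tensoring with a separable state does not increase the robustness of entanglement. -/

import Mathlib

open scoped BigOperators Matrix ComplexOrder

noncomputable section

/-- The pure product state |a⟩⟨a| ⊗ |b⟩⟨b| as a matrix on the bipartite index type. -/
def prodState {α β : Type*} [Fintype α] [Fintype β] (a : α → ℂ) (b : β → ℂ) :
    Matrix (α × β) (α × β) ℂ :=
  fun x y => (a x.1 * star (a y.1)) * (b x.2 * star (b y.2))

/-- A bipartite matrix is separable if it is a convex combination of pure product states. -/
def SepState {α β : Type*} [Fintype α] [Fintype β]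
    (σ : Matrix (α × β) (α × β) ℂ) : Prop :=
  ∃ (k : ℕ) (p : Fin k → ℝ) (a : Fin k → α → ℂ) (b : Fin k → β → ℂ),
    (∀ i, 0 ≤ p i) ∧ (∑ i, p i = 1) ∧
    (∀ i, ∑ x, ‖a i x‖ ^ 2 = 1) ∧ (∀ i, ∑ x, ‖b i x‖ ^ 2 = 1) ∧
    σ = ∑ i, ((p i : ℂ)) • prodState (a i) (b i)

/-- A density matrix: positive semidefinite with unit trace. -/
def IsDensity {n : Type*} [Fintype n] [DecidableEq n] (σ : Matrix n n ℂ) : Prop :=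
  σ.PosSemidef ∧ σ.trace = 1

/-- The robustness of entanglement: the least s ≥ 0 such that mixing σ with some
separable state π with weights 1/(1+s), s/(1+s) yields a separable state. -/
def robustness {α β : Type*} [Fintype α] [Fintype β] [DecidableEq α] [DecidableEq β]
    (σ : Matrix (α × β) (α × β) ℂ) : ℝ :=
  sInf { s : ℝ | 0 ≤ s ∧ ∃ π : Matrix (α × β) (α × β) ℂ, SepState π ∧
    SepState ((((1 + s)⁻¹ : ℝ) : ℂ) • σ + (((s / (1 + s)) : ℝ) : ℂ) • π) }

/-- σ₁ ⊗ σ₂ regrouped across the A₁A₂ | B₁B₂ cut. -/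
def tensorAB {m n : ℕ} (σ₁ : Matrix (Fin m × Fin m) (Fin m × Fin m) ℂ)
    (σ₂ : Matrix (Fin n × Fin n) (Fin n × Fin n) ℂ) :
    Matrix ((Fin m × Fin n) × (Fin m × Fin n)) ((Fin m × Fin n) × (Fin m × Fin n)) ℂ :=
  fun x y => σ₁ (x.1.1, x.2.1) (y.1.1, y.2.1) * σ₂ (x.1.2, x.2.2) (y.1.2, y.2.2)

lemma sepState_of_index {α β : Type*} [Fintype α] [Fintype β] {ι : Type*} [Fintype ι]
    (σ : Matrix (α × β) (α × β) ℂ) (p : ι → ℝ) (a : ι → α → ℂ) (b : ι → β → ℂ)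
    (hp : ∀ i, 0 ≤ p i) (hs : ∑ i, p i = 1)
    (ha : ∀ i, ∑ x, ‖a i x‖ ^ 2 = 1) (hb : ∀ i, ∑ x, ‖b i x‖ ^ 2 = 1)
    (hσ : σ = ∑ i, ((p i : ℂ)) • prodState (a i) (b i)) : SepState σ := by
  have e := Fintype.equivFin ι
  refine ⟨Fintype.card ι, p ∘ e.symm, a ∘ e.symm, b ∘ e.symm, fun i => hp _, ?_,
    fun i => ha _, fun i => hb _, ?_⟩
  · rw [← hs]; exact Equiv.sum_comp e.symm p
  · rw [hσ]
    exact (Equiv.sum_comp e.symm fun i => ((p i : ℂ)) • prodState (a i) (b i)).symm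

lemma normalize_vec {γ : Type*} [Fintype γ] [DecidableEq γ] [Nonempty γ] (c : γ → ℂ) :
    ∃ cc : γ → ℂ, (∑ x, ‖cc x‖ ^ 2 = 1) ∧
      ∀ x y, c x * star (c y) = (((∑ z, ‖c z‖ ^ 2 : ℝ)) : ℂ) * (cc x * star (cc y)) := by
  set t : ℝ := ∑ z, ‖c z‖ ^ 2 with ht
  have ht0 : 0 ≤ t := Finset.sum_nonneg fun z _ => by positivity
  rcases eq_or_lt_of_le ht0 with h0 | hpos
  · -- t = 0 : all c z = 0
    have hz : ∀ z, c z = 0 := by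
      intro z
      have := (Finset.sum_eq_zero_iff_of_nonneg (fun z _ => by positivity)).mp h0.symm z
        (Finset.mem_univ z)
      simpa using this
    refine ⟨fun x => if x = Classical.arbitrary γ then 1 else 0, ?_, ?_⟩
    · simp [apply_ite (‖·‖ : ℂ → ℝ), apply_ite (· ^ 2 : ℝ → ℝ), Finset.sum_ite_eq']
    intro x y; simp [hz, ← h0]
  · refine ⟨fun x => ((Real.sqrt t)⁻¹ : ℂ) * c x, ?_, ?_⟩
    · have hs : Real.sqrt t ≠ 0 := by positivity
      simp only [norm_mul, mul_pow]
      rw [← Finset.mul_sum, ← ht]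
      have : ‖((Real.sqrt t)⁻¹ : ℂ)‖ = (Real.sqrt t)⁻¹ := by
        rw [norm_inv]
        simp [Real.sqrt_nonneg, abs_of_nonneg]
      rw [this]
      rw [inv_pow, Real.sq_sqrt ht0]
      field_simp
    · intro x y
      have hst : star ((Real.sqrt t : ℂ))⁻¹ = ((Real.sqrt t : ℂ))⁻¹ := by
        simp [← Complex.ofReal_inv]
      have h1 : ((Real.sqrt t : ℝ) : ℂ) * ((Real.sqrt t : ℝ) : ℂ) = (t : ℂ) := by
        rw [← Complex.ofReal_mul, Real.mul_self_sqrt ht0]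
      have hs0 : ((Real.sqrt t : ℝ) : ℂ) ≠ 0 := by
        simp only [ne_eq, Complex.ofReal_eq_zero]
        positivity
      rw [star_mul', hst, ← h1]
      field_simp

lemma sepState_tensor {m n : ℕ} {σ₁ : Matrix (Fin m × Fin m) (Fin m × Fin m) ℂ}
    {τ : Matrix (Fin n × Fin n) (Fin n × Fin n) ℂ}
    (h1 : SepState σ₁) (h2 : SepState τ) : SepState (tensorAB σ₁ τ) := by
  obtain ⟨k, p, a, b, hp, hps, ha, hb, hσ⟩ := h1
  obtain ⟨l, q, c, d, hq, hqs, hc, hd, hτ⟩ := h2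
  apply sepState_of_index (ι := Fin k × Fin l) _ (fun i => p i.1 * q i.2)
    (fun i u => a i.1 u.1 * c i.2 u.2) (fun i u => b i.1 u.1 * d i.2 u.2)
  · exact fun i => mul_nonneg (hp _) (hq _)
  · 
    rw [Fintype.sum_prod_type]
    simp only [← Finset.mul_sum, hqs, mul_one]
    exact hps
  · intro i
    rw [Fintype.sum_prod_type]
    simp only [norm_mul, mul_pow, ← Finset.mul_sum, hc, mul_one]
    exact ha i.1
  · intro i
    rw [Fintype.sum_prod_type]
    simp only [norm_mul, mul_pow, ← Finset.mul_sum, hd, mul_one]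
    exact hb i.1
  · subst hσ hτ
    funext x y
    simp only [tensorAB, Matrix.sum_apply, Matrix.smul_apply, prodState, smul_eq_mul,
      Fintype.sum_prod_type, Finset.sum_mul, Finset.mul_sum]
    rw [Finset.sum_comm]
    refine Finset.sum_congr rfl fun i _ => Finset.sum_congr rfl fun j _ => ?_
    push_cast
    simp only [star_mul']
    ring

def PT {m n : ℕ}
    (ρ : Matrix ((Fin m × Fin n) × (Fin m × Fin n)) ((Fin m × Fin n) × (Fin m × Fin n)) ℂ) :
    Matrix (Fin n × Fin n) (Fin n × Fin n) ℂ :=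
  fun x y => ∑ u : Fin m, ∑ v : Fin m, ρ ((u, x.1), (v, x.2)) ((u, y.1), (v, y.2))

lemma PT_add_smul {m n : ℕ} (c c' : ℂ)
    (ρ ρ' : Matrix ((Fin m × Fin n) × (Fin m × Fin n)) ((Fin m × Fin n) × (Fin m × Fin n)) ℂ) :
    PT (c • ρ + c' • ρ') = c • PT ρ + c' • PT ρ' := by
  funext x y
  simp [PT, Finset.mul_sum, Finset.sum_add_distrib]

lemma PT_tensor {m n : ℕ} (σ₁ : Matrix (Fin m × Fin m) (Fin m × Fin m) ℂ)
    (σ₂ : Matrix (Fin n × Fin n) (Fin n × Fin n) ℂ) (h : σ₁.trace = 1) :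
    PT (tensorAB σ₁ σ₂) = σ₂ := by
  funext x y
  simp only [PT, tensorAB]
  simp only [← Finset.sum_mul]
  rw [show (∑ u : Fin m, ∑ v : Fin m, σ₁ (u, v) (u, v)) = σ₁.trace from
    (Fintype.sum_prod_type (f := σ₁.diag)).symm, h, one_mul]

lemma sepState_PT {m n : ℕ} (hn : 0 < n)
    {ρ : Matrix ((Fin m × Fin n) × (Fin m × Fin n)) ((Fin m × Fin n) × (Fin m × Fin n)) ℂ}
    (h : SepState ρ) : SepState (PT ρ) := by
  haveI : Nonempty (Fin n) := ⟨⟨0, hn⟩⟩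
  obtain ⟨k, p, a, b, hp, hps, ha, hb, hρ⟩ := h
  choose A hA1 hA2 using fun (i : Fin k) (u : Fin m) => normalize_vec (fun x => a i (u, x))
  choose B hB1 hB2 using fun (i : Fin k) (v : Fin m) => normalize_vec (fun x => b i (v, x))
  set wa : Fin k → Fin m → ℝ := fun i u => ∑ z, ‖a i (u, z)‖ ^ 2 with hwa
  set wb : Fin k → Fin m → ℝ := fun i v => ∑ z, ‖b i (v, z)‖ ^ 2 with hwb
  have hwa1 : ∀ i, ∑ u, wa i u = 1 := fun i =>
    (Fintype.sum_prod_type (f := fun x => ‖a i x‖ ^ 2)).symm.trans (ha i)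
  have hwb1 : ∀ i, ∑ v, wb i v = 1 := fun i =>
    (Fintype.sum_prod_type (f := fun x => ‖b i x‖ ^ 2)).symm.trans (hb i)
  apply sepState_of_index (ι := Fin k × Fin m × Fin m) _
    (fun j => p j.1 * (wa j.1 j.2.1 * wb j.1 j.2.2))
    (fun j => A j.1 j.2.1) (fun j => B j.1 j.2.2)
  · intro j
    have h1 : 0 ≤ wa j.1 j.2.1 := Finset.sum_nonneg fun z _ => by positivity
    have h2 : 0 ≤ wb j.1 j.2.2 := Finset.sum_nonneg fun z _ => by positivity
    exact mul_nonneg (hp _) (mul_nonneg h1 h2)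
  · 
    rw [Fintype.sum_prod_type]
    refine Eq.trans (Finset.sum_congr rfl fun i _ => ?_) hps
    rw [Fintype.sum_prod_type]
    simp only [← Finset.mul_sum, hwb1, mul_one, ← Finset.sum_mul, hwa1, one_mul]
  · exact fun j => hA1 j.1 j.2.1
  · exact fun j => hB1 j.1 j.2.2
  · subst hρ
    funext x y
    simp only [PT, Matrix.sum_apply, Matrix.smul_apply, prodState, smul_eq_mul,
      Fintype.sum_prod_type]
    refine (Finset.sum_congr rfl fun u _ => Finset.sum_comm).trans ?_
    rw [Finset.sum_comm]
    refine Finset.sum_congr rfl fun i _ => Finset.sum_congr rfl fun u _ =>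
      Finset.sum_congr rfl fun v _ => ?_
    rw [hA2 i u x.1 y.1, hB2 i v x.2 y.2]
    simp only [hwa, hwb]
    push_cast
    ring

lemma tensor_add_smul {m n : ℕ} (σ₁ : Matrix (Fin m × Fin m) (Fin m × Fin m) ℂ) (c c' : ℂ)
    (τ π : Matrix (Fin n × Fin n) (Fin n × Fin n) ℂ) :
    tensorAB σ₁ (c • τ + c' • π) = c • tensorAB σ₁ τ + c' • tensorAB σ₁ π := by
  funext x y
  simp only [tensorAB, Matrix.add_apply, Matrix.smul_apply, smul_eq_mul]
  ring

/-- Tensoring with a separable state does not increase the robustness of entanglement. -/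
theorem robustness_tensor_separable {m n : ℕ}
    (σ₁ : Matrix (Fin m × Fin m) (Fin m × Fin m) ℂ)
    (σ₂ : Matrix (Fin n × Fin n) (Fin n × Fin n) ℂ)
    (h₁ : IsDensity σ₁) (h₂ : IsDensity σ₂) (hsep : SepState σ₁) :
    robustness (tensorAB σ₁ σ₂) ≤ robustness σ₂ := by
  rcases Nat.eq_zero_or_pos n with rfl | hn
  · exact absurd h₂.2 (by simp [Matrix.trace])
  have hset : { s : ℝ | 0 ≤ s ∧ ∃ π, SepState π ∧
        SepState ((((1 + s)⁻¹ : ℝ) : ℂ) • tensorAB σ₁ σ₂ + (((s / (1 + s)) : ℝ) : ℂ) • π) } =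
      { s : ℝ | 0 ≤ s ∧ ∃ π, SepState π ∧
        SepState ((((1 + s)⁻¹ : ℝ) : ℂ) • σ₂ + (((s / (1 + s)) : ℝ) : ℂ) • π) } := by
    ext s
    simp only [Set.mem_setOf_eq]
    constructor
    · rintro ⟨hs0, π, hπ, hmix⟩
      refine ⟨hs0, PT π, sepState_PT hn hπ, ?_⟩
      have h' := sepState_PT hn hmix
      rwa [PT_add_smul, PT_tensor σ₁ σ₂ h₁.2] at h'
    · rintro ⟨hs0, π, hπ, hmix⟩
      refine ⟨hs0, tensorAB σ₁ π, sepState_tensor hsep hπ, ?_⟩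
      rw [← tensor_add_smul]
      exact sepState_tensor hsep hmix
  rw [robustness, robustness, hset]

end
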